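/- In a periodic state, two 2s are never separated only by 1s: if S is a balanced periodic state of the balanced candy sharing game with n children, then there do not exist i ∈ ZMod n and an integer k with 1 ≤ k < n such that S i = 2, S (i + k) = 2, and S (i + m) = 1 for every integer m with 0 < m < k. (In particular, a periodic state has no two adjacent entries equal to 2 and no arc of the form 2,1,2.) -/

import Mathlib

/-- The sharing map of the candy sharing game: each child with at least 2 candies
passes one candy to each neighbour. -/
def shareMap (n : ℕ) (S : ZMod n → ℕ) : ZMod n → ℕ := fun i =>
  (if 2 ≤ S i then S i - 2 else S i)
    + (if 2 ≤ S (i - 1) then 1 else 0)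
    + (if 2 ≤ S (i + 1) then 1 else 0)

/-- A state is periodic if some positive iterate of the sharing map fixes it. -/
def IsPeriodicState (n : ℕ) (S : ZMod n → ℕ) : Prop :=
  ∃ k : ℕ, 1 ≤ k ∧ (shareMap n)^[k] S = S

/-- A state is balanced if the total number of candies equals the number of children. -/
def IsBalanced (n : ℕ) [NeZero n] (S : ZMod n → ℕ) : Prop :=
  ∑ i : ZMod n, S i = n

/-- A clockwise wave state: starting from some position, the circular list of values
is a concatenation of blocks, each equal to [0,2] or [1]. -/
def IsClockwiseWave (n : ℕ) (S : ZMod n → ℕ) : Prop :=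
  ∃ (a : ZMod n) (L : List (List ℕ)),
    (∀ b ∈ L, b = [0, 2] ∨ b = [1]) ∧
    L.flatten = (List.range n).map fun j => S (a + (j : ZMod n))

/-- An anticlockwise wave state: starting from some position, the circular list of values
is a concatenation of blocks, each equal to [2,0] or [1]. -/
def IsAnticlockwiseWave (n : ℕ) (S : ZMod n → ℕ) : Prop :=
  ∃ (a : ZMod n) (L : List (List ℕ)),
    (∀ b ∈ L, b = [2, 0] ∨ b = [1]) ∧
    L.flatten = (List.range n).map fun j => S (a + (j : ZMod n))

/-- The state obtained when child `j` alone shares (assuming `2 ≤ S j`). -/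
def shareAt (n : ℕ) (j : ZMod n) (S : ZMod n → ℕ) : ZMod n → ℕ := fun i =>
  if i = j then S j - 2
  else if i = j - 1 then S (j - 1) + 1
  else if i = j + 1 then S (j + 1) + 1
  else S i

/-- The index of a state: the sum over all arcs (of length 1 to n) of their
deficiencies, where the deficiency of an arc of length k is max(0, k - (sum of the arc)). -/
def stateIndex (n : ℕ) [NeZero n] (S : ZMod n → ℕ) : ℕ :=
  ∑ i : ZMod n, ∑ k ∈ Finset.Icc 1 n, (k - ∑ j ∈ Finset.range k, S (i + (j : ZMod n)))

/-- The invariant τ of a state. -/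
def tauInv (n : ℕ) [NeZero n] (S : ZMod n → ℕ) : ZMod n :=
  (if Even n then ((n / 2 : ℕ) : ZMod n) else 0)
    + ∑ i : ZMod n, (i.val : ZMod n) * (S i : ZMod n)

namespace CandyNoTwoTwos

variable {n : ℕ}

def fire (S : ZMod n → ℕ) (j : ZMod n) : ℤ := if 2 ≤ S j then 1 else 0

lemma fire_nonneg (S : ZMod n → ℕ) (j : ZMod n) : 0 ≤ fire S j := by
  unfold fire; split <;> norm_num

lemma fire_le_one (S : ZMod n → ℕ) (j : ZMod n) : fire S j ≤ 1 := by
  unfold fire; split <;> norm_num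

lemma fire_of (S : ZMod n → ℕ) (j : ZMod n) (h : 2 ≤ S j) : fire S j = 1 := if_pos h

lemma fire_of_not (S : ZMod n → ℕ) (j : ZMod n) (h : ¬ 2 ≤ S j) : fire S j = 0 := if_neg h

lemma lt_two_of_fire_eq_zero {S : ZMod n → ℕ} {j : ZMod n} (h : fire S j = 0) : S j < 2 := by
  by_contra hc
  rw [fire_of S j (by omega)] at h
  exact one_ne_zero h

lemma shareMap_cast (S : ZMod n → ℕ) (i : ZMod n) :
    ((shareMap n S) i : ℤ) = (S i : ℤ) - 2 * fire S i + fire S (i - 1) + fire S (i + 1) := by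
  simp only [shareMap, fire]
  split_ifs <;> push_cast <;> omega

lemma sum_shareMap [NeZero n] (S : ZMod n → ℕ) :
    ∑ i : ZMod n, shareMap n S i = ∑ i : ZMod n, S i := by
  have key : ∀ (g : ZMod n → ℕ) (c : ZMod n), ∑ i : ZMod n, g (i + c) = ∑ i : ZMod n, g i :=
    fun g c => Fintype.sum_bijective (· + c) (Equiv.addRight c).bijective _ _ (fun i => rfl)
  have h1 : ∑ i : ZMod n, (if 2 ≤ S (i - 1) then 1 else 0)
      = ∑ i : ZMod n, (if 2 ≤ S i then 1 else 0) := by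
    have := key (fun i => if 2 ≤ S i then 1 else 0) (-1)
    simpa [sub_eq_add_neg] using this
  have h2 : ∑ i : ZMod n, (if 2 ≤ S (i + 1) then 1 else 0)
      = ∑ i : ZMod n, (if 2 ≤ S i then 1 else 0) :=
    key (fun i => if 2 ≤ S i then 1 else 0) 1
  simp only [shareMap]
  rw [Finset.sum_add_distrib, Finset.sum_add_distrib, h1, h2, ← Finset.sum_add_distrib,
    ← Finset.sum_add_distrib]
  exact Finset.sum_congr rfl fun i _ => by split_ifs <;> omega

def arcSum (S : ZMod n → ℕ) (a : ZMod n) (L : ℕ) : ℤ :=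
  ∑ j ∈ Finset.range L, (S (a + (j : ZMod n)) : ℤ)

def arcDef (S : ZMod n → ℕ) (a : ZMod n) (L : ℕ) : ℤ := (L : ℤ) - arcSum S a L

lemma arcSum_succ (S : ZMod n → ℕ) (a : ZMod n) (L : ℕ) :
    arcSum S a (L + 1) = arcSum S a L + (S (a + (L : ZMod n)) : ℤ) :=
  Finset.sum_range_succ _ L

lemma arcSum_succ' (S : ZMod n → ℕ) (a : ZMod n) (L : ℕ) :
    arcSum S a (L + 1) = (S a : ℤ) + arcSum S (a + 1) L := by
  have h0 : a + ((0 : ℕ) : ZMod n) = a := by push_cast; ring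
  calc arcSum S a (L + 1)
      = ∑ j ∈ Finset.range L, (S (a + ((j + 1 : ℕ) : ZMod n)) : ℤ)
        + (S (a + ((0 : ℕ) : ZMod n)) : ℤ) := Finset.sum_range_succ' _ L
    _ = arcSum S (a + 1) L + (S a : ℤ) := by
        rw [h0]
        congr 1
        refine Finset.sum_congr rfl fun j _ => ?_
        congr 2
        push_cast
        ring
    _ = (S a : ℤ) + arcSum S (a + 1) L := add_comm _ _

lemma sum_shift (g : ℕ → ℤ) (L : ℕ) :
    ∑ j ∈ Finset.range L, g (j + 1) = ∑ j ∈ Finset.range L, g j + g L - g 0 := by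
  have h1 := Finset.sum_range_succ' g L
  have h2 := Finset.sum_range_succ g L
  linarith

lemma arcSum_step [NeZero n] (S : ZMod n → ℕ) (a : ZMod n) (L : ℕ) (hL : 1 ≤ L) :
    arcSum (shareMap n S) a L
      = arcSum S a L - fire S a - fire S (a + ((L - 1 : ℕ) : ZMod n))
        + fire S (a - 1) + fire S (a + (L : ZMod n)) := by
  set G : ℕ → ℤ := fun j => fire S (a + (j : ZMod n)) with hG
  set H : ℕ → ℤ := fun j => fire S (a - 1 + (j : ZMod n)) with hH
  have hGH : ∀ j : ℕ, H (j + 1) = G j := by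
    intro j; simp only [hG, hH]; congr 1; push_cast; ring
  have e1 : ∀ j : ℕ, fire S (a + (j : ZMod n) + 1) = G (j + 1) := by
    intro j; simp only [hG]; congr 1; push_cast; ring
  have e2 : ∀ j : ℕ, fire S (a + (j : ZMod n) - 1) = H j := by
    intro j; simp only [hH]; congr 1; ring
  have split : arcSum (shareMap n S) a L
      = arcSum S a L - 2 * ∑ j ∈ Finset.range L, G j
        + ∑ j ∈ Finset.range L, H j + ∑ j ∈ Finset.range L, G (j + 1) := by
    unfold arcSum
    have hterm : ∀ j ∈ Finset.range L, ((shareMap n S (a + (j : ZMod n))) : ℤ)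
        = ((S (a + (j : ZMod n)) : ℤ) - 2 * G j) + H j + G (j + 1) := by
      intro j _
      rw [shareMap_cast S (a + (j : ZMod n)), e1 j, e2 j]
    rw [Finset.sum_congr rfl hterm, Finset.sum_add_distrib, Finset.sum_add_distrib,
      Finset.sum_sub_distrib, ← Finset.mul_sum]
  have hshift1 : ∑ j ∈ Finset.range L, G (j + 1)
      = ∑ j ∈ Finset.range L, G j + G L - G 0 := sum_shift G L
  have hshift2 : ∑ j ∈ Finset.range L, H (j + 1)
      = ∑ j ∈ Finset.range L, H j + H L - H 0 := sum_shift H L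
  have hHG : ∑ j ∈ Finset.range L, H (j + 1) = ∑ j ∈ Finset.range L, G j :=
    Finset.sum_congr rfl fun j _ => hGH j
  have hHL : H L = G (L - 1) := by
    simp only [hG, hH]
    rw [show a - 1 + (L : ZMod n) = a + ((L - 1 : ℕ) : ZMod n) by
      rw [Nat.cast_sub hL]; push_cast; ring]
  have hG0 : G 0 = fire S a := by simp only [hG]; norm_num
  have hH0 : H 0 = fire S (a - 1) := by simp only [hH]; norm_num
  have hsumH : ∑ j ∈ Finset.range L, H j
      = ∑ j ∈ Finset.range L, G j - H L + H 0 := by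
    rw [hHG] at hshift2; linarith
  rw [split, hshift1, hsumH, hHL, hG0, hH0]
  simp only [hG]
  ring

lemma arcDef_step [NeZero n] (S : ZMod n → ℕ) (a : ZMod n) (L : ℕ) (hL : 1 ≤ L) :
    arcDef (shareMap n S) a L
      = arcDef S a L + fire S a + fire S (a + ((L - 1 : ℕ) : ZMod n))
        - fire S (a - 1) - fire S (a + (L : ZMod n)) := by
  unfold arcDef
  rw [arcSum_step S a L hL]
  ring

lemma sum_range_translate [NeZero n] (T : ZMod n → ℕ) (a : ZMod n) :
    ∑ j ∈ Finset.range n, T (a + (j : ZMod n)) = ∑ v : ZMod n, T v := by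
  rw [← Fin.sum_univ_eq_sum_range (fun j => T (a + (j : ZMod n))) n]
  refine Fintype.sum_bijective (fun j : Fin n => a + ((j : ℕ) : ZMod n)) ?_ _ _ (fun j => rfl)
  rw [Fintype.bijective_iff_injective_and_card]
  constructor
  · intro j1 j2 h
    have h2 : ((j1 : ℕ) : ZMod n) = ((j2 : ℕ) : ZMod n) := by
      exact add_left_cancel h
    have h3 := congrArg ZMod.val h2
    rw [ZMod.val_cast_of_lt j1.2, ZMod.val_cast_of_lt j2.2] at h3
    exact Fin.ext h3
  · simp [ZMod.card]



lemma periodic_arcDef_le_one (n : ℕ) [NeZero n]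
    (S : ZMod n → ℕ) (hbal : IsBalanced n S) (hper : IsPeriodicState n S)
    (a0 : ZMod n) (L0 : ℕ) (hL01 : 1 ≤ L0) (hL0n : L0 ≤ n) :
    arcDef S a0 L0 ≤ 1 := by
  classical
  by_contra hcon
  push_neg at hcon
  obtain ⟨p, hp, hfix⟩ := hper
  set St : ℕ → ZMod n → ℕ := fun t => (shareMap n)^[t] S with hStdef
  have hSt0 : St 0 = S := rfl
  have hStsucc : ∀ t, St (t + 1) = shareMap n (St t) := fun t =>
    Function.iterate_succ_apply' _ t S
  have hStper : ∀ t, St (t + p) = St t := by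
    intro t
    show (shareMap n)^[t + p] S = (shareMap n)^[t] S
    rw [Function.iterate_add_apply, hfix]
  have hmod : ∀ t, ∃ r, r < p ∧ St t = St r := by
    intro t
    induction t using Nat.strong_induction_on with
    | _ t ih =>
      by_cases htp : t < p
      · exact ⟨t, htp, rfl⟩
      · obtain ⟨r, hr, he⟩ := ih (t - p) (by omega)
        refine ⟨r, hr, ?_⟩
        calc St t = St (t - p + p) := by rw [show t - p + p = t by omega]
          _ = St (t - p) := hStper (t - p)
          _ = St r := he
  have hbal_t : ∀ t, ∑ i : ZMod n, St t i = n := by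
    intro t
    induction t with
    | zero => exact hbal
    | succ t ih => rw [hStsucc, sum_shareMap]; exact ih
  set Ω : Finset (ℕ × ZMod n × ℕ) := Finset.range p ×ˢ Finset.univ ×ˢ Finset.Icc 1 n with hΩdef
  set Df : ℕ × ZMod n × ℕ → ℤ := fun q => arcDef (St q.1) q.2.1 q.2.2 with hDfdef
  have hmemΩ : ∀ (t : ℕ) (a : ZMod n) (L : ℕ), t < p → 1 ≤ L → L ≤ n → (t, a, L) ∈ Ω := by
    intro t a L h1 h2 h3
    simp only [hΩdef, Finset.mem_product, Finset.mem_range, Finset.mem_univ, Finset.mem_Icc]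
    exact ⟨h1, trivial, h2, h3⟩
  have hΩne : Ω.Nonempty := ⟨(0, a0, L0), hmemΩ 0 a0 L0 hp hL01 hL0n⟩
  set M : ℤ := (Ω.image Df).max' (hΩne.image _) with hMdef
  have h_le : ∀ (t : ℕ) (a : ZMod n) (L : ℕ), 1 ≤ L → L ≤ n → arcDef (St t) a L ≤ M := by
    intro t a L h1 h2
    obtain ⟨r, hr, he⟩ := hmod t
    rw [he]
    exact Finset.le_max' (Ω.image Df) (Df (r, a, L))
      (Finset.mem_image_of_mem Df (hmemΩ r a L hr h1 h2))
  have hM2 : 2 ≤ M := by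
    have h := h_le 0 a0 L0 hL01 hL0n
    rw [hSt0] at h
    omega
  have hMmem : ∃ q ∈ Ω, Df q = M := by
    obtain ⟨q, hq, he⟩ := Finset.mem_image.mp ((Ω.image Df).max'_mem (hΩne.image _))
    exact ⟨q, hq, he⟩
  obtain ⟨q0, hq0Ω, hq0M⟩ := hMmem
  obtain ⟨q, hqmem, hqmin⟩ := Finset.exists_min_image (Ω.filter fun q => Df q = M)
    (fun q => q.2.2) ⟨q0, Finset.mem_filter.mpr ⟨hq0Ω, hq0M⟩⟩
  obtain ⟨hqΩ, hqM⟩ := Finset.mem_filter.mp hqmem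
  obtain ⟨t0, a, L⟩ := q
  simp only [hΩdef, Finset.mem_product, Finset.mem_range, Finset.mem_univ, Finset.mem_Icc,
    true_and] at hqΩ
  obtain ⟨ht0, hL1, hLn⟩ := hqΩ
  have hqM' : arcDef (St t0) a L = M := hqM
  have h_min : ∀ (t : ℕ) (a' : ZMod n) (L' : ℕ), 1 ≤ L' → L' ≤ n →
      arcDef (St t) a' L' = M → L ≤ L' := by
    intro t a' L' h1 h2 h3
    obtain ⟨r, hr, he⟩ := hmod t
    rw [he] at h3
    exact hqmin (r, a', L') (Finset.mem_filter.mpr ⟨hmemΩ r a' L' hr h1 h2, h3⟩)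
  have hL2 : 2 ≤ L := by
    by_contra hc
    have hL1' : L = 1 := by omega
    have h1 : arcDef (St t0) a 1 ≤ 1 := by
      unfold arcDef arcSum
      rw [Finset.sum_range_one]
      have : (0 : ℤ) ≤ (St t0 (a + ((0 : ℕ) : ZMod n)) : ℤ) := Int.natCast_nonneg _
      omega
    rw [hL1'] at hqM'
    omega
  -- key backward step
  have key : ∀ u, arcDef (St (u + 1)) a L = M →
      arcDef (St u) a L = M ∧ St u (a - 1) < 2 := by
    intro u hu
    have hstep := arcDef_step (St u) a L (by omega)
    rw [← hStsucc u, hu] at hstep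
    have hD : arcDef (St u) a L ≤ M := h_le u a L (by omega) hLn
    have hPn := fire_nonneg (St u) (a - 1)
    have hQn := fire_nonneg (St u) (a + (L : ZMod n))
    by_cases hA : 2 ≤ St u a
    · exfalso
      have hfa : fire (St u) a = 1 := fire_of _ _ hA
      have hA' : (2 : ℤ) ≤ (St u a : ℤ) := by exact_mod_cast hA
      by_cases hB : 2 ≤ St u (a + ((L - 1 : ℕ) : ZMod n))
      · have hfb : fire (St u) (a + ((L - 1 : ℕ) : ZMod n)) = 1 := fire_of _ _ hB
        have hB' : (2 : ℤ) ≤ (St u (a + ((L - 1 : ℕ) : ZMod n)) : ℤ) := by exact_mod_cast hB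
        rcases Nat.lt_or_ge L 3 with h3 | h3
        · -- L = 2
          have hLeq : L = 2 := by omega
          have e1 : arcSum (St u) a L = arcSum (St u) a (L - 1)
              + (St u (a + ((L - 1 : ℕ) : ZMod n)) : ℤ) := by
            have h := arcSum_succ (St u) a (L - 1)
            rw [show L - 1 + 1 = L by omega] at h
            exact h
          have e2 : arcSum (St u) a (L - 1) = (St u a : ℤ) + arcSum (St u) (a + 1) (L - 2) := by
            have h := arcSum_succ' (St u) a (L - 2)
            rw [show L - 2 + 1 = L - 1 by omega] at h
            exact h
          have e3 : arcSum (St u) (a + 1) (L - 2) = 0 := by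
            rw [show L - 2 = 0 by omega]
            simp [arcSum]
          have hDval : arcDef (St u) a L
              = (L : ℤ) - (St u a : ℤ) - (St u (a + ((L - 1 : ℕ) : ZMod n)) : ℤ) := by
            unfold arcDef
            rw [e1, e2, e3]
            ring
          have hL' : (L : ℤ) = 2 := by exact_mod_cast congrArg (Nat.cast : ℕ → ℤ) hLeq
          linarith [hstep, hDval]
        · -- L ≥ 3 : shrink both ends
          have e1 : arcSum (St u) a L = arcSum (St u) a (L - 1)
              + (St u (a + ((L - 1 : ℕ) : ZMod n)) : ℤ) := by
            have h := arcSum_succ (St u) a (L - 1)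
            rw [show L - 1 + 1 = L by omega] at h
            exact h
          have e2 : arcSum (St u) a (L - 1) = (St u a : ℤ) + arcSum (St u) (a + 1) (L - 2) := by
            have h := arcSum_succ' (St u) a (L - 2)
            rw [show L - 2 + 1 = L - 1 by omega] at h
            exact h
          have hd' : arcDef (St u) (a + 1) (L - 2)
              = arcDef (St u) a L - 2 + (St u a : ℤ)
                + (St u (a + ((L - 1 : ℕ) : ZMod n)) : ℤ) := by
            unfold arcDef
            rw [e1, e2]
            have : ((L - 2 : ℕ) : ℤ) = (L : ℤ) - 2 := by omega
            rw [this]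
            ring
          have hle' : arcDef (St u) (a + 1) (L - 2) ≤ M := h_le u (a + 1) (L - 2) (by omega) (by omega)
          have heq' : arcDef (St u) (a + 1) (L - 2) = M := by linarith [hstep]
          have := h_min u (a + 1) (L - 2) (by omega) (by omega) heq'
          omega
      · -- A fires, B not
        have hfb : fire (St u) (a + ((L - 1 : ℕ) : ZMod n)) = 0 := fire_of_not _ _ hB
        have e2 : arcSum (St u) a L = (St u a : ℤ) + arcSum (St u) (a + 1) (L - 1) := by
          have h := arcSum_succ' (St u) a (L - 1)
          rw [show L - 1 + 1 = L by omega] at h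
          exact h
        have hd' : arcDef (St u) (a + 1) (L - 1) = arcDef (St u) a L - 1 + (St u a : ℤ) := by
          unfold arcDef
          rw [e2]
          have : ((L - 1 : ℕ) : ℤ) = (L : ℤ) - 1 := by omega
          rw [this]
          ring
        have hle' : arcDef (St u) (a + 1) (L - 1) ≤ M := h_le u (a + 1) (L - 1) (by omega) (by omega)
        have heq' : arcDef (St u) (a + 1) (L - 1) = M := by linarith [hstep]
        have := h_min u (a + 1) (L - 1) (by omega) (by omega) heq'
        omega
    · have hfa : fire (St u) a = 0 := fire_of_not _ _ hA
      by_cases hB : 2 ≤ St u (a + ((L - 1 : ℕ) : ZMod n))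
      · exfalso
        have hfb : fire (St u) (a + ((L - 1 : ℕ) : ZMod n)) = 1 := fire_of _ _ hB
        have hB' : (2 : ℤ) ≤ (St u (a + ((L - 1 : ℕ) : ZMod n)) : ℤ) := by exact_mod_cast hB
        have e1 : arcSum (St u) a L = arcSum (St u) a (L - 1)
            + (St u (a + ((L - 1 : ℕ) : ZMod n)) : ℤ) := by
          have h := arcSum_succ (St u) a (L - 1)
          rw [show L - 1 + 1 = L by omega] at h
          exact h
        have hd' : arcDef (St u) a (L - 1) = arcDef (St u) a L - 1
            + (St u (a + ((L - 1 : ℕ) : ZMod n)) : ℤ) := by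
          unfold arcDef
          rw [e1]
          have : ((L - 1 : ℕ) : ℤ) = (L : ℤ) - 1 := by omega
          rw [this]
          ring
        have hle' : arcDef (St u) a (L - 1) ≤ M := h_le u a (L - 1) (by omega) (by omega)
        have heq' : arcDef (St u) a (L - 1) = M := by linarith [hstep]
        have := h_min u a (L - 1) (by omega) (by omega) heq'
        omega
      · have hfb : fire (St u) (a + ((L - 1 : ℕ) : ZMod n)) = 0 := fire_of_not _ _ hB
        constructor
        · linarith [hstep]
        · by_contra hP
          push_neg at hP
          have hfp : fire (St u) (a - 1) = 1 := fire_of _ _ hP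
          linarith [hstep]
  -- backward induction over the period
  have back : ∀ s, s ≤ p → arcDef (St (t0 + (p - s))) a L = M := by
    intro s
    induction s with
    | zero =>
      intro _
      rw [show p - 0 = p by omega, hStper t0]
      exact hqM'
    | succ s ih =>
      intro hsp
      have h1 := ih (by omega)
      rw [show t0 + (p - s) = (t0 + (p - (s + 1))) + 1 by omega] at h1
      exact (key _ h1).1
  have nofire_a : ∀ s, s < p → St (t0 + s) (a - 1) < 2 := by
    intro s hs
    have h1 := back (p - (s + 1)) (by omega)
    rw [show t0 + (p - (p - (s + 1))) = (t0 + s) + 1 by omega] at h1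
    exact (key _ h1).2
  -- propagation of non-firing
  have nofire_step : ∀ v : ZMod n, (∀ s, s < p → St (t0 + s) v < 2) →
      ∀ s, s < p → St (t0 + s) (v + 1) < 2 ∧ St (t0 + s) (v - 1) < 2 := by
    intro v hv
    have hstepv : ∀ s, ((St (t0 + s + 1)) v : ℤ)
        = (St (t0 + s) v : ℤ) - 2 * fire (St (t0 + s)) v
          + fire (St (t0 + s)) (v - 1) + fire (St (t0 + s)) (v + 1) := by
      intro s
      rw [hStsucc (t0 + s)]
      exact shareMap_cast _ _
    have hfv : ∀ s, s < p → fire (St (t0 + s)) v = 0 := fun s hs =>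
      fire_of_not _ _ (by have := hv s hs; omega)
    have mono : ∀ s', s' ≤ p → ∀ s, s ≤ s' → (St (t0 + s) v : ℤ) ≤ (St (t0 + s') v : ℤ) := by
      intro s'
      induction s' with
      | zero =>
        intro _ s hs
        rw [Nat.le_zero.mp hs]
      | succ s' ih =>
        intro hp' s hs
        rcases Nat.eq_or_lt_of_le hs with h | hlt
        · rw [h]
        · have h1 := ih (by omega) s (by omega)
          have h2 := hstepv s'
          have h3 := hfv s' (by omega)
          have h4 := fire_nonneg (St (t0 + s')) (v - 1)
          have h5 := fire_nonneg (St (t0 + s')) (v + 1)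
          have h6 : (St (t0 + s') v : ℤ) ≤ (St (t0 + s' + 1) v : ℤ) := by
            rw [h2, h3]; linarith
          have h7 : t0 + (s' + 1) = t0 + s' + 1 := rfl
          rw [h7]
          linarith
    intro s hs
    have l1 : (St (t0 + s + 1) v : ℤ) ≤ (St (t0 + p) v : ℤ) := by
      have h := mono p le_rfl (s + 1) (by omega)
      rw [show t0 + (s + 1) = t0 + s + 1 from rfl] at h
      exact h
    have l2 : (St (t0 + 0) v : ℤ) ≤ (St (t0 + s) v : ℤ) := mono s (by omega) 0 (by omega)
    have l3 : (St (t0 + p) v : ℤ) = (St (t0 + 0) v : ℤ) := by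
      rw [hStper t0, Nat.add_zero]
    have h2 := hstepv s
    have h3 := hfv s hs
    have h4 := fire_nonneg (St (t0 + s)) (v - 1)
    have h5 := fire_nonneg (St (t0 + s)) (v + 1)
    constructor
    · exact lt_two_of_fire_eq_zero (by linarith)
    · exact lt_two_of_fire_eq_zero (by linarith)
  have allm : ∀ m : ℕ, ∀ s, s < p → St (t0 + s) ((a - 1) + (m : ZMod n)) < 2 := by
    intro m
    induction m with
    | zero =>
      intro s hs
      have h := nofire_a s hs
      simpa using h
    | succ m ih =>
      intro s hs
      have h := (nofire_step ((a - 1) + (m : ZMod n)) ih s hs).1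
      have he : (a - 1) + ((m + 1 : ℕ) : ZMod n) = (a - 1) + (m : ZMod n) + 1 := by
        push_cast; ring
      rwa [he]
  have allj : ∀ j : ZMod n, St t0 j < 2 := by
    intro j
    have h := allm (j - (a - 1)).val 0 hp
    rw [Nat.add_zero] at h
    rwa [ZMod.natCast_rightInverse (j - (a - 1)), add_sub_cancel] at h
  have hall1 : ∀ j : ZMod n, St t0 j = 1 := by
    have hle : ∀ j ∈ Finset.univ, St t0 j ≤ (fun _ : ZMod n => 1) j := fun j _ => by
      show St t0 j ≤ 1
      have := allj j; omega
    have hsum : ∑ j : ZMod n, St t0 j = ∑ _j : ZMod n, 1 := by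
      rw [hbal_t t0]
      simp [ZMod.card]
    intro j
    have := (Finset.sum_eq_sum_iff_of_le hle).mp hsum j (Finset.mem_univ j)
    simpa using this
  have hzero : arcDef (St t0) a L = 0 := by
    unfold arcDef arcSum
    rw [Finset.sum_congr rfl (fun j _ => by rw [hall1])]
    simp
  omega

end CandyNoTwoTwos

/-- In a balanced periodic state, two 2s are never separated only by 1s. -/
theorem periodic_no_two_twos_separated_by_ones (n : ℕ) (hn : 3 ≤ n) [NeZero n]
    (S : ZMod n → ℕ) (hbal : IsBalanced n S) (hper : IsPeriodicState n S) :
    ¬ ∃ (i : ZMod n) (k : ℕ), 1 ≤ k ∧ k < n ∧ S i = 2 ∧ S (i + (k : ZMod n)) = 2 ∧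
      ∀ m : ℕ, 0 < m → m < k → S (i + (m : ZMod n)) = 1 := by
  rintro ⟨i, k, hk1, hkn, hSi, hSk, hmid⟩
  have htot : ∑ j ∈ Finset.range n, S (i + (j : ZMod n)) = n := by
    rw [CandyNoTwoTwos.sum_range_translate]
    exact hbal
  have hIco : ∑ j ∈ Finset.Ico 1 k, S (i + (j : ZMod n)) = k - 1 := by
    have hone : ∀ j ∈ Finset.Ico 1 k, S (i + (j : ZMod n)) = 1 := by
      intro j hj
      have hj' := Finset.mem_Ico.mp hj
      exact hmid j (by omega) (by omega)
    rw [Finset.sum_congr rfl hone, Finset.sum_const, Nat.card_Ico, smul_eq_mul, mul_one]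
  have hpat : ∑ j ∈ Finset.range (k + 1), S (i + (j : ZMod n)) = k + 3 := by
    rw [Finset.sum_range_succ, Finset.range_eq_Ico,
      Finset.sum_eq_sum_Ico_succ_bot (by omega : 0 < k), hIco]
    have h0 : i + ((0 : ℕ) : ZMod n) = i := by push_cast; ring
    rw [h0, hSi, hSk]
    omega
  have hsplit := Finset.sum_Ico_consecutive (fun j => S (i + (j : ZMod n)))
    (Nat.zero_le (k + 1)) (by omega : k + 1 ≤ n)
  rw [← Finset.range_eq_Ico, ← Finset.range_eq_Ico] at hsplit
  set R := ∑ j ∈ Finset.Ico (k + 1) n, S (i + (j : ZMod n)) with hRdef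
  have hRn : k + 3 + R = n := by
    rw [← htot, ← hsplit, hpat]
  have harcsum : CandyNoTwoTwos.arcSum S (i + ((k + 1 : ℕ) : ZMod n)) (n - (k + 1)) = (R : ℤ) := by
    unfold CandyNoTwoTwos.arcSum
    rw [hRdef, Finset.sum_Ico_eq_sum_range]
    push_cast
    refine Finset.sum_congr rfl fun j _ => ?_
    congr 2
    push_cast
    ring
  have harc : CandyNoTwoTwos.arcDef S (i + ((k + 1 : ℕ) : ZMod n)) (n - (k + 1)) = 2 := by
    unfold CandyNoTwoTwos.arcDef
    rw [harcsum]
    omega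
  have hle := CandyNoTwoTwos.periodic_arcDef_le_one n S hbal hper
    (i + ((k + 1 : ℕ) : ZMod n)) (n - (k + 1)) (by omega) (by omega)
  omega
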